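/- arXiv:2207.04466 — 7 statements merged into one kernel-verified Lean document; each statement's English description precedes it below -/
import Mathlib

section
/- Let r ≥ 1 and let n₁,…,n_r, μ₁,…,μ_r be positive integers. Equip H = ⊕ᵢ₌₁ʳ (ℂ^{nᵢ} ⊗ ℂ^{μᵢ}) with the orthogonal direct sum of the tensor-product Hermitian inner products, and represent the algebra A = ⊕ᵢ₌₁ʳ M_{nᵢ}(ℂ) on H by π(⊕ᵢ aᵢ)(⊕ᵢ ξᵢ ⊗ vᵢ) = ⊕ᵢ (aᵢ ξᵢ) ⊗ vᵢ. If γ : H → H is a complex-linear map with γ† = γ (adjoint with respect to the inner product), γ² = id, and γ ∘ π(a) = π(a) ∘ γ for all a ∈ A, then there exists a family of linear maps ℓᵢ : ℂ^{μᵢ} → ℂ^{μᵢ} with ℓᵢ† = ℓᵢ and ℓᵢ² = id such that γ(ξᵢ ⊗ vᵢ) = ξᵢ ⊗ ℓᵢ(vᵢ) for every i and every ξᵢ ⊗ vᵢ ∈ ℂ^{nᵢ} ⊗ ℂ^{μᵢ}. -/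
/-- The embedding of the pure tensor `ξ ⊗ v` into the `i`-th summand of
`⊕ᵢ ℂ^{nᵢ} ⊗ ℂ^{μᵢ}`, realized as `EuclideanSpace ℂ (Σ i, Fin (n i) × Fin (μ i))`. -/
noncomputable def embA {r : ℕ} (n μ : Fin r → ℕ) (i : Fin r)
    (ξ : Fin (n i) → ℂ) (v : Fin (μ i) → ℂ) :
    EuclideanSpace ℂ (Σ j : Fin r, Fin (n j) × Fin (μ j)) :=
  WithLp.toLp 2 (fun x => if h : x.1 = i then
      ξ (Fin.cast (congrArg n h) x.2.1) * v (Fin.cast (congrArg μ h) x.2.2)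
    else 0)

namespace St2
open scoped ComplexConjugate
variable {r : ℕ} {n μ : Fin r → ℕ}

noncomputable def ee (n μ : Fin r → ℕ) (z : Σ j : Fin r, Fin (n j) × Fin (μ j)) :
    EuclideanSpace ℂ (Σ j : Fin r, Fin (n j) × Fin (μ j)) :=
  WithLp.toLp 2 (fun y => if y = z then 1 else 0)

lemma expand (ψ : EuclideanSpace ℂ (Σ j : Fin r, Fin (n j) × Fin (μ j))) :
    ψ = ∑ z, ψ z • ee n μ z := by
  ext y
  rw [show (∑ z, ψ z • ee n μ z) y = ∑ z, ψ z • ee n μ z y from by simp]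
  simp [ee]

lemma gamma_eval (γ : EuclideanSpace ℂ (Σ j : Fin r, Fin (n j) × Fin (μ j)) →ₗ[ℂ]
    EuclideanSpace ℂ (Σ j : Fin r, Fin (n j) × Fin (μ j)))
    (ψ : EuclideanSpace ℂ (Σ j : Fin r, Fin (n j) × Fin (μ j)))
    (x : Σ j : Fin r, Fin (n j) × Fin (μ j)) :
    γ ψ x = ∑ z, γ (ee n μ z) x * ψ z := by
  conv_lhs => rw [expand ψ, map_sum]
  rw [show (∑ z, γ (ψ z • ee n μ z)) x = ∑ z, γ (ψ z • ee n μ z) x from by simp]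
  congr 1; funext z
  rw [map_smul]
  simp [mul_comm]

noncomputable def aU (n : Fin r → ℕ) (i : Fin r) (p₀ p₁ : Fin (n i)) :
    ∀ j, Matrix (Fin (n j)) (Fin (n j)) ℂ :=
  fun j => Matrix.of fun s t =>
    if (⟨j, s⟩ : Σ k, Fin (n k)) = ⟨i, p₀⟩ ∧ (⟨j, t⟩ : Σ k, Fin (n k)) = ⟨i, p₁⟩ then 1 else 0

lemma aU_same (i : Fin r) (p₀ p₁ s t : Fin (n i)) :
    aU n i p₀ p₁ i s t = if s = p₀ ∧ t = p₁ then 1 else 0 := by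
  simp [aU, Sigma.mk.inj_iff]

lemma aU_ne {i j : Fin r} (h : j ≠ i) (p₀ p₁ : Fin (n i)) (s t : Fin (n j)) :
    aU n i p₀ p₁ j s t = 0 := by
  simp [aU, Sigma.mk.inj_iff, h]

lemma collapse (i : Fin r) (p₀ p₁ : Fin (n i)) (f : Fin (n i) → ℂ) :
    ∑ p', aU n i p₀ p₁ i p₀ p' * f p' = f p₁ := by
  rw [Finset.sum_eq_single p₁]
  · simp [aU_same]
  · intro b _ hb; simp [aU_same, hb]
  · simp

lemma piaU_eq (i : Fin r) (p₀ p₁ : Fin (n i)) (q : Fin (μ i)) :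
    WithLp.toLp 2 (fun x : (Σ j : Fin r, Fin (n j) × Fin (μ j)) =>
        ∑ p', aU n i p₀ p₁ x.1 x.2.1 p' * ee n μ ⟨i, (p₁, q)⟩ ⟨x.1, (p', x.2.2)⟩)
      = ee n μ ⟨i, (p₀, q)⟩ := by
  ext x
  simp only [PiLp.toLp_apply]
  obtain ⟨j, t, u⟩ := x
  rcases eq_or_ne j i with rfl | hj
  · rw [Finset.sum_eq_single p₁]
    · simp only [aU_same, ee, Sigma.mk.inj_iff, heq_eq_eq, Prod.mk.injEq]
      by_cases h1 : t = p₀ <;> by_cases h2 : u = q <;> simp [h1, h2]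
    · intro b _ hb
      simp only [ee, Sigma.mk.inj_iff, heq_eq_eq, Prod.mk.injEq]
      simp [hb]
    · simp
  · simp only [ee, Sigma.mk.inj_iff]
    rw [Finset.sum_eq_zero, if_neg (by simp [hj])]
    intro b _
    simp [aU_ne hj]

lemma piaU_zero (i : Fin r) (p₀ p₁ : Fin (n i)) {s : Fin (n i)} (hs : s ≠ p₁) (q : Fin (μ i)) :
    WithLp.toLp 2 (fun x : (Σ j : Fin r, Fin (n j) × Fin (μ j)) =>
        ∑ p', aU n i p₀ p₁ x.1 x.2.1 p' * ee n μ ⟨i, (s, q)⟩ ⟨x.1, (p', x.2.2)⟩)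
      = (0 : EuclideanSpace ℂ (Σ j : Fin r, Fin (n j) × Fin (μ j))) := by
  ext x
  simp only [PiLp.toLp_apply]
  obtain ⟨j, t, u⟩ := x
  show _ = (0:ℂ)
  rcases eq_or_ne j i with rfl | hj
  · rw [Finset.sum_eq_zero]
    intro b _
    simp only [aU_same, ee, Sigma.mk.inj_iff, heq_eq_eq, Prod.mk.injEq]
    by_cases hb : b = p₁
    · subst hb; simp [hs.symm]
    · simp [hb]
  · rw [Finset.sum_eq_zero]
    intro b _
    simp [aU_ne hj]

section rel
variable (γ : EuclideanSpace ℂ (Σ j : Fin r, Fin (n j) × Fin (μ j)) →ₗ[ℂ]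
         EuclideanSpace ℂ (Σ j : Fin r, Fin (n j) × Fin (μ j)))
    (hcomm : ∀ (a : ∀ j : Fin r, Matrix (Fin (n j)) (Fin (n j)) ℂ)
        (ψ : EuclideanSpace ℂ (Σ j : Fin r, Fin (n j) × Fin (μ j))),
      γ (WithLp.toLp 2 (fun x : (Σ j : Fin r, Fin (n j) × Fin (μ j)) =>
            ∑ p', a x.1 x.2.1 p' * ψ ⟨x.1, (p', x.2.2)⟩))
        = fun x : (Σ j : Fin r, Fin (n j) × Fin (μ j)) =>
            ∑ p', a x.1 x.2.1 p' * (γ ψ) ⟨x.1, (p', x.2.2)⟩)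
include hcomm

lemma relA {i j : Fin r} (hj : j ≠ i) (t : Fin (n j)) (u : Fin (μ j))
    (s : Fin (n i)) (q : Fin (μ i)) :
    γ (ee n μ ⟨i, (s, q)⟩) ⟨j, (t, u)⟩ = 0 := by
  have h := hcomm (aU n i s s) (ee n μ ⟨i, (s, q)⟩)
  rw [piaU_eq] at h
  have h2 := congrFun h ⟨j, (t, u)⟩
  rw [h2, Finset.sum_eq_zero]
  intro b _
  simp [aU_ne hj]

lemma relB (i : Fin r) {t s : Fin (n i)} (hts : t ≠ s) (u q : Fin (μ i)) :
    γ (ee n μ ⟨i, (s, q)⟩) ⟨i, (t, u)⟩ = 0 := by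
  have h := hcomm (aU n i t t) (ee n μ ⟨i, (s, q)⟩)
  rw [piaU_zero i t t hts.symm q] at h
  have h2 := congrFun h.symm ⟨i, (t, u)⟩
  rw [collapse i t t (fun p' => γ (ee n μ ⟨i, (s, q)⟩) ⟨i, (p', u)⟩)] at h2
  rw [h2, map_zero]; rfl

lemma relC (i : Fin r) (p₀ p₁ : Fin (n i)) (u q : Fin (μ i)) :
    γ (ee n μ ⟨i, (p₀, q)⟩) ⟨i, (p₀, u)⟩ = γ (ee n μ ⟨i, (p₁, q)⟩) ⟨i, (p₁, u)⟩ := by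
  have h := hcomm (aU n i p₀ p₁) (ee n μ ⟨i, (p₁, q)⟩)
  rw [piaU_eq] at h
  have h2 := congrFun h ⟨i, (p₀, u)⟩
  rw [h2, collapse i p₀ p₁ (fun p' => γ (ee n μ ⟨i, (p₁, q)⟩) ⟨i, (p', u)⟩)]

end rel

lemma inner_ee (x : Σ j : Fin r, Fin (n j) × Fin (μ j))
    (g : EuclideanSpace ℂ (Σ j : Fin r, Fin (n j) × Fin (μ j))) :
    (inner ℂ (ee n μ x) g : ℂ) = g x := by
  rw [PiLp.inner_apply]
  rw [Finset.sum_eq_single x]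
  · simp [ee]
  · intro b _ hb; simp [ee, hb]
  · simp

lemma herm (γ : EuclideanSpace ℂ (Σ j : Fin r, Fin (n j) × Fin (μ j)) →ₗ[ℂ]
    EuclideanSpace ℂ (Σ j : Fin r, Fin (n j) × Fin (μ j)))
    (hsa : LinearMap.adjoint γ = γ)
    (x z : Σ j : Fin r, Fin (n j) × Fin (μ j)) :
    conj (γ (ee n μ z) x) = γ (ee n μ x) z := by
  have h1 : (inner ℂ (γ (ee n μ z)) (ee n μ x) : ℂ) = inner ℂ (ee n μ z) (γ (ee n μ x)) := by
    conv_lhs => rw [← hsa]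
    exact LinearMap.adjoint_inner_left γ (ee n μ x) (ee n μ z)
  calc conj (γ (ee n μ z) x) = conj (inner ℂ (ee n μ x) (γ (ee n μ z)) : ℂ) := by rw [inner_ee]
    _ = inner ℂ (γ (ee n μ z)) (ee n μ x) := by rw [inner_conj_symm]
    _ = inner ℂ (ee n μ z) (γ (ee n μ x)) := h1
    _ = γ (ee n μ x) z := inner_ee _ _

end St2

open St2

/-- A grading `γ` (self-adjoint involution commuting with the representation
of `A = ⊕ᵢ M_{nᵢ}(ℂ)` on `H = ⊕ᵢ ℂ^{nᵢ} ⊗ ℂ^{μᵢ}`) reduces to a family of self-adjoint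
involutions `ℓᵢ` on the multiplicity spaces: `γ(ξ ⊗ v) = ξ ⊗ ℓᵢ(v)`. -/
theorem statement2 (r : ℕ) (hr : 1 ≤ r) (n μ : Fin r → ℕ)
    (hn : ∀ i, 1 ≤ n i) (hμ : ∀ i, 1 ≤ μ i)
    (γ : EuclideanSpace ℂ (Σ j : Fin r, Fin (n j) × Fin (μ j)) →ₗ[ℂ]
         EuclideanSpace ℂ (Σ j : Fin r, Fin (n j) × Fin (μ j)))
    (hsa : LinearMap.adjoint γ = γ)
    (hsq : γ ∘ₗ γ = LinearMap.id)
    (hcomm : ∀ (a : ∀ j : Fin r, Matrix (Fin (n j)) (Fin (n j)) ℂ)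
        (ψ : EuclideanSpace ℂ (Σ j : Fin r, Fin (n j) × Fin (μ j))),
      γ (WithLp.toLp 2 (fun x : (Σ j : Fin r, Fin (n j) × Fin (μ j)) =>
            ∑ p', a x.1 x.2.1 p' * ψ ⟨x.1, (p', x.2.2)⟩))
        = fun x : (Σ j : Fin r, Fin (n j) × Fin (μ j)) =>
            ∑ p', a x.1 x.2.1 p' * (γ ψ) ⟨x.1, (p', x.2.2)⟩) :
    ∃ ℓ : (i : Fin r) → (EuclideanSpace ℂ (Fin (μ i)) →ₗ[ℂ] EuclideanSpace ℂ (Fin (μ i))),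
      (∀ i, LinearMap.adjoint (ℓ i) = ℓ i) ∧
      (∀ i, ℓ i ∘ₗ ℓ i = LinearMap.id) ∧
      (∀ (i : Fin r) (ξ : Fin (n i) → ℂ) (v : Fin (μ i) → ℂ),
        γ (embA n μ i ξ v) = embA n μ i ξ (ℓ i (WithLp.toLp 2 v))) := by
  classical
  set p0 : ∀ i, Fin (n i) := fun i => ⟨0, hn i⟩ with hp0
  set L : ∀ i, Matrix (Fin (μ i)) (Fin (μ i)) ℂ :=
    fun i => Matrix.of fun u q => γ (ee n μ ⟨i, (p0 i, q)⟩) ⟨i, (p0 i, u)⟩ with hL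
  have ℓapp : ∀ (i : Fin r) (v : EuclideanSpace ℂ (Fin (μ i))) (u : Fin (μ i)),
      Matrix.toEuclideanLin (L i) v u = ∑ q, L i u q * v q := fun i v u => rfl
  have embAi : ∀ (i : Fin r) (ξ : Fin (n i) → ℂ) (w : Fin (μ i) → ℂ) (s : Fin (n i)) (q : Fin (μ i)),
      embA n μ i ξ w ⟨i, (s, q)⟩ = ξ s * w q := by
    intro i ξ w s q
    simp [embA]
  have keyP : ∀ (i : Fin r) (ξ : Fin (n i) → ℂ) (v : Fin (μ i) → ℂ),
      γ (embA n μ i ξ v) = embA n μ i ξ (Matrix.toEuclideanLin (L i) (WithLp.toLp 2 v)) := by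
    intro i ξ v
    ext x
    obtain ⟨j, t, u⟩ := x
    rw [gamma_eval]
    rw [← Finset.univ_sigma_univ, Finset.sum_sigma]
    rw [Finset.sum_eq_single i]
    · rcases eq_or_ne j i with rfl | hj
      · rw [show (embA n μ j ξ (Matrix.toEuclideanLin (L j) (WithLp.toLp 2 v))) ⟨j, (t, u)⟩
            = ξ t * ∑ q, L j u q * v q from by rw [embAi, ℓapp]]
        rw [Fintype.sum_prod_type]
        rw [Finset.sum_eq_single t]
        · rw [Finset.mul_sum]
          congr 1; funext q
          rw [embAi, relC γ hcomm j t (p0 j) u q]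
          show L j u q * (ξ t * v q) = ξ t * (L j u q * v q)
          ring
        · intro s _ hst
          rw [Finset.sum_eq_zero]
          intro q _
          rw [relB γ hcomm j hst.symm u q]
          · ring
        · simp
      · rw [show (embA n μ i ξ (Matrix.toEuclideanLin (L i) (WithLp.toLp 2 v))) ⟨j, (t, u)⟩ = 0 from dif_neg hj]
        rw [Finset.sum_eq_zero]
        intro c _
        rw [show (⟨i, c⟩ : Σ k : Fin r, Fin (n k) × Fin (μ k)) = ⟨i, (c.1, c.2)⟩ from rfl,
          relA γ hcomm hj t u c.1 c.2]
        ring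
    · intro j' _ hj'
      rw [Finset.sum_eq_zero]
      intro c _
      rw [show embA n μ i ξ v ⟨j', c⟩ = 0 from dif_neg hj']
      ring
    · simp
  refine ⟨fun i => Matrix.toEuclideanLin (L i), ?_, ?_, keyP⟩
  · intro i
    have hermL : (L i).conjTranspose = L i := by
      funext u q
      show (starRingEnd ℂ) (L i q u) = L i u q
      exact herm γ hsa _ _
    rw [← Matrix.toEuclideanLin_conjTranspose_eq_adjoint, hermL]
  · intro i
    apply LinearMap.ext
    intro v
    have h1 := keyP i (fun _ => 1) v
    have h2 := keyP i (fun _ => 1) (Matrix.toEuclideanLin (L i) v)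
    have h3 : γ (γ (embA n μ i (fun _ => 1) v)) = embA n μ i (fun _ => 1) v := by
      have := LinearMap.ext_iff.mp hsq (embA n μ i (fun _ => 1) v)
      simpa using this
    rw [h1, h2] at h3
    ext u
    have h4 := congrFun (congrArg WithLp.ofLp h3) ⟨i, (p0 i, u)⟩
    rw [embAi, embAi] at h4
    simpa using h4
end

section
/- Let H_A and H_B be finite-dimensional complex Hilbert spaces and φ_H : H_A → H_B a nonzero linear map, with R = Ran(φ_H), P the orthogonal projection of H_B onto R, and R^⊥ the orthogonal complement. Let J_A be an antiunitary operator on H_A with J_A² = ε_A·id and J_B an antiunitary operator on H_B with J_B² = ε_B·id, where ε_A, ε_B ∈ {+1, −1}, and suppose J_B is strongly φ-compatible with J_A, i.e. φ_H ∘ J_A = J_B ∘ φ_H. Then: (1) ε_A = ε_B; (2) J_B⁻¹ is strongly φ-compatible with J_A⁻¹, i.e. φ_H ∘ J_A⁻¹ = J_B⁻¹ ∘ φ_H; (3) J_B(R) = R and J_B(R^⊥) ⊆ R^⊥; (4) if operators A on H_A and B on H_B are φ-compatible (φ_H ∘ A = P ∘ B ∘ φ_H), then J_A A J_A⁻¹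 and J_B B J_B⁻¹ are φ-compatible (φ_H ∘ (J_A A J_A⁻¹) = P ∘ (J_B B J_B⁻¹) ∘ φ_H). -/
/-- Properties of a real structure `J_B` strongly φ-compatible with `J_A`:
(1) `ε_A = ε_B`; (2) the inverses are strongly φ-compatible; (3) `J_B` maps `R = Ran φ_H`
onto itself and preserves `R^⊥`; (4) conjugation by the real structures preserves
φ-compatibility of operators. Antiunitary maps are modeled as conjugate-linear maps. -/
theorem statement12 {HA HB : Type*}
    [NormedAddCommGroup HA] [InnerProductSpace ℂ HA] [FiniteDimensional ℂ HA]
    [NormedAddCommGroup HB] [InnerProductSpace ℂ HB] [FiniteDimensional ℂ HB]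
    (φH : HA →ₗ[ℂ] HB) (hφH_ne : φH ≠ 0)
    (JA : HA →ₗ⋆[ℂ] HA) (JB : HB →ₗ⋆[ℂ] HB)
    (hJA_bij : Function.Bijective JA) (hJB_bij : Function.Bijective JB)
    (hJA_anti : ∀ ψ₁ ψ₂ : HA, (inner ℂ (JA ψ₁) (JA ψ₂) : ℂ) = inner ℂ ψ₂ ψ₁)
    (hJB_anti : ∀ ψ₁ ψ₂ : HB, (inner ℂ (JB ψ₁) (JB ψ₂) : ℂ) = inner ℂ ψ₂ ψ₁)
    (εA εB : ℝ) (hεA : εA = 1 ∨ εA = -1) (hεB : εB = 1 ∨ εB = -1)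
    (hJA2 : ∀ ψ, JA (JA ψ) = (εA : ℂ) • ψ)
    (hJB2 : ∀ ψ, JB (JB ψ) = (εB : ℂ) • ψ)
    (hstrong : ∀ ψ, φH (JA ψ) = JB (φH ψ)) :
    εA = εB ∧
    (∀ (JA' : HA →ₗ⋆[ℂ] HA) (JB' : HB →ₗ⋆[ℂ] HB),
      (∀ ψ, JA' (JA ψ) = ψ) → (∀ ψ, JA (JA' ψ) = ψ) →
      (∀ ψ, JB' (JB ψ) = ψ) → (∀ ψ, JB (JB' ψ) = ψ) →
      ∀ ψ, φH (JA' ψ) = JB' (φH ψ)) ∧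
    (JB '' (LinearMap.range φH : Set HB) = (LinearMap.range φH : Set HB)) ∧
    (∀ x ∈ (LinearMap.range φH)ᗮ, JB x ∈ (LinearMap.range φH)ᗮ) ∧
    (∀ (A : HA →ₗ[ℂ] HA) (B : HB →ₗ[ℂ] HB),
      (∀ ψ, φH (A ψ) = (Submodule.orthogonalProjection (LinearMap.range φH) (B (φH ψ)) : HB)) →
      ∀ (JA' : HA →ₗ⋆[ℂ] HA) (JB' : HB →ₗ⋆[ℂ] HB),
        (∀ ψ, JA' (JA ψ) = ψ) → (∀ ψ, JA (JA' ψ) = ψ) →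
        (∀ ψ, JB' (JB ψ) = ψ) → (∀ ψ, JB (JB' ψ) = ψ) →
        ∀ ψ, φH (JA (A (JA' ψ)))
          = (Submodule.orthogonalProjection (LinearMap.range φH) (JB (B (JB' (φH ψ)))) : HB)) := by
  set R := LinearMap.range φH with hR
  have hεB2 : (εB : ℂ) * (εB : ℂ) = 1 := by
    rcases hεB with h | h <;> simp [h] <;> norm_num
  -- (1)
  have h1 : εA = εB := by
    obtain ⟨ψ, hψ⟩ : ∃ ψ, φH ψ ≠ 0 := by
      by_contra h
      push_neg at h
      exact hφH_ne (LinearMap.ext fun x => by simp [h x])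
    have key : (εA : ℂ) • φH ψ = (εB : ℂ) • φH ψ := by
      have := hstrong (JA ψ)
      rw [hJA2] at this
      rw [hstrong ψ, hJB2] at this
      simpa [map_smul] using this
    have : ((εA : ℂ) - εB) • φH ψ = 0 := by rw [sub_smul, key, sub_self]
    have h2 : ((εA : ℂ) - εB) = 0 := by
      rcases smul_eq_zero.mp this with h | h
      · exact h
      · exact absurd h hψ
    have : (εA : ℂ) = εB := by linear_combination h2
    exact_mod_cast this
  refine ⟨h1, ?_, ?_, ?_, ?_⟩
  -- (2)
  · intro JA' JB' hA'l hA'r hB'l hB'r ψ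
    have h := hstrong (JA' ψ)
    rw [hA'r] at h
    have h2 := congrArg JB' h
    rw [hB'l] at h2
    exact h2.symm
  -- (3a)
  · ext x
    constructor
    · rintro ⟨y, ⟨z, rfl⟩, rfl⟩
      exact ⟨JA z, hstrong z⟩
    · rintro ⟨z, rfl⟩
      obtain ⟨w, hw⟩ := hJA_bij.2 z
      exact ⟨φH w, ⟨w, rfl⟩, by rw [← hstrong, hw]⟩
  -- (3b)
  · intro x hx
    rw [Submodule.mem_orthogonal]
    rintro u ⟨y, rfl⟩
    have hz : JB ((εB : ℂ) • φH (JA y)) = φH y := by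
      rw [map_smulₛₗ, hstrong, hJB2, smul_smul, Complex.conj_ofReal, hεB2, one_smul]
    have hzr : ((εB : ℂ) • φH (JA y)) ∈ R := Submodule.smul_mem _ _ ⟨JA y, rfl⟩
    calc (inner ℂ (φH y) (JB x) : ℂ)
        = inner ℂ (JB ((εB : ℂ) • φH (JA y))) (JB x) := by rw [hz]
      _ = inner ℂ x ((εB : ℂ) • φH (JA y)) := hJB_anti _ _
      _ = starRingEnd ℂ (inner ℂ ((εB : ℂ) • φH (JA y)) x) := (inner_conj_symm _ _).symm
      _ = 0 := by rw [(Submodule.mem_orthogonal R x).mp hx _ hzr, map_zero]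
  -- (4)
  · intro A B hAB JA' JB' hA'l hA'r hB'l hB'r ψ
    have hJBR : ∀ v ∈ R, JB v ∈ R := by
      rintro v ⟨y, rfl⟩
      exact ⟨JA y, hstrong y⟩
    have hJBperp : ∀ x ∈ Rᗮ, JB x ∈ Rᗮ := by
      intro x hx
      rw [Submodule.mem_orthogonal]
      rintro u ⟨y, rfl⟩
      have hz : JB ((εB : ℂ) • φH (JA y)) = φH y := by
        rw [map_smulₛₗ, hstrong, hJB2, smul_smul, Complex.conj_ofReal, hεB2, one_smul]
      have hzr : ((εB : ℂ) • φH (JA y)) ∈ R := Submodule.smul_mem _ _ ⟨JA y, rfl⟩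
      calc (inner ℂ (φH y) (JB x) : ℂ)
          = inner ℂ (JB ((εB : ℂ) • φH (JA y))) (JB x) := by rw [hz]
        _ = inner ℂ x ((εB : ℂ) • φH (JA y)) := hJB_anti _ _
        _ = starRingEnd ℂ (inner ℂ ((εB : ℂ) • φH (JA y)) x) := (inner_conj_symm _ _).symm
        _ = 0 := by rw [(Submodule.mem_orthogonal R x).mp hx _ hzr, map_zero]
    -- JB commutes with the orthogonal projection
    have hcomm : ∀ w : HB, JB ((Submodule.orthogonalProjection R w : HB))
        = (Submodule.orthogonalProjection R (JB w) : HB) := by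
      intro w
      have hdecomp : JB w = JB (Submodule.orthogonalProjection R w : HB)
          + JB (w - (Submodule.orthogonalProjection R w : HB)) := by
        rw [← map_add]; congr 1; abel
      have h1' : JB (Submodule.orthogonalProjection R w : HB) ∈ R :=
        hJBR _ (SetLike.coe_mem _)
      have h2' : JB (w - (Submodule.orthogonalProjection R w : HB)) ∈ Rᗮ :=
        hJBperp _ (Submodule.sub_starProjection_mem_orthogonal w)
      have : (Submodule.orthogonalProjection R (JB w) : HB)
          = JB (Submodule.orthogonalProjection R w : HB) := by
        rw [hdecomp, map_add, Submodule.coe_add,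
          Submodule.orthogonalProjectionOnto_apply_of_mem_orthogonal h2',
          (show ((Submodule.orthogonalProjection R (JB (Submodule.orthogonalProjection R w : HB)) : HB))
              = JB (Submodule.orthogonalProjection R w : HB) from
              Submodule.starProjection_eq_self_iff.mpr h1'), Submodule.coe_zero, add_zero]
      exact this.symm
    calc φH (JA (A (JA' ψ)))
        = JB (φH (A (JA' ψ))) := hstrong _
      _ = JB ((Submodule.orthogonalProjection R (B (φH (JA' ψ))) : HB)) := by rw [hAB]
      _ = (Submodule.orthogonalProjection R (JB (B (φH (JA' ψ)))) : HB) := hcomm _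
      _ = (Submodule.orthogonalProjection R (JB (B (JB' (φH ψ)))) : HB) := by
          congr 2
          have := hstrong (JA' ψ)
          rw [hA'r] at this
          have := congrArg JB' this
          rw [hB'l] at this
          rw [← this]
end

section
/- Let H_A and H_B be finite-dimensional complex Hilbert spaces, φ_H : H_A → H_B a linear map, R = Ran(φ_H), P the orthogonal projection of H_B onto R, and R^⊥ the orthogonal complement. Let γ_A be an operator on H_A and γ_B an operator on H_B with γ_A† = γ_A, γ_A² = id, γ_B† = γ_B, γ_B² = id, and suppose γ_B is φ-compatible with γ_A, i.e. φ_H(γ_A ψ) = P(γ_B(φ_H ψ)) for all ψ ∈ H_A. Then: (1) γ_B(R) ⊆ R and γ_B(R^⊥) ⊆ R^⊥, so γ_B is in fact strongly φ-compatible with γ_A (φ_H ∘ γ_A = γ_B ∘ φ_H); (2) φ_H maps the (+1)-eigenspace of γ_A into the (+1)-eigenspace of γ_B and the (−1)-eigenspace of γ_A into the (−1)-eigenspace of γ_B. -/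
/-- If the gradings `γ_A, γ_B` (self-adjoint involutions) are
φ-compatible, then `γ_B` preserves `R = Ran φ_H` and `R^⊥` (hence is strongly
φ-compatible with `γ_A`), and `φ_H` maps the `(±1)`-eigenspaces of `γ_A` into the
corresponding eigenspaces of `γ_B`. -/
theorem statement13 {HA HB : Type*}
    [NormedAddCommGroup HA] [InnerProductSpace ℂ HA] [FiniteDimensional ℂ HA]
    [NormedAddCommGroup HB] [InnerProductSpace ℂ HB] [FiniteDimensional ℂ HB]
    (φH : HA →ₗ[ℂ] HB)
    (γA : HA →ₗ[ℂ] HA) (γB : HB →ₗ[ℂ] HB)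
    (hγA_sa : LinearMap.adjoint γA = γA) (hγA_sq : γA ∘ₗ γA = LinearMap.id)
    (hγB_sa : LinearMap.adjoint γB = γB) (hγB_sq : γB ∘ₗ γB = LinearMap.id)
    (hcompat : ∀ ψ, φH (γA ψ)
      = (Submodule.orthogonalProjection (LinearMap.range φH) (γB (φH ψ)) : HB)) :
    (∀ x ∈ LinearMap.range φH, γB x ∈ LinearMap.range φH) ∧
    (∀ x ∈ (LinearMap.range φH)ᗮ, γB x ∈ (LinearMap.range φH)ᗮ) ∧
    (∀ ψ, φH (γA ψ) = γB (φH ψ)) ∧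
    (∀ ψ, γA ψ = ψ → γB (φH ψ) = φH ψ) ∧
    (∀ ψ, γA ψ = -ψ → γB (φH ψ) = -(φH ψ)) := by
  set R := LinearMap.range φH with hR
  have hγBsq : ∀ w, γB (γB w) = w := by
    intro w
    have := congrArg (fun f => f w) hγB_sq
    simpa using this
  have hγAsq : ∀ ψ, γA (γA ψ) = ψ := by
    intro ψ
    have := congrArg (fun f => f ψ) hγA_sq
    simpa using this
  -- γB is an isometry
  have hiso : ∀ w : HB, ‖γB w‖ = ‖w‖ := by
    intro w
    have h := LinearMap.adjoint_inner_left γB (γB w) w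
    rw [hγB_sa, hγBsq, inner_self_eq_norm_sq_to_K, inner_self_eq_norm_sq_to_K] at h
    have h2 : ‖γB w‖ ^ 2 = ‖w‖ ^ 2 := by exact_mod_cast h
    nlinarith [norm_nonneg (γB w), norm_nonneg w]
  -- projection shrinks norms
  have hple : ∀ w : HB, ∀ S : Submodule ℂ HB,
      ‖(Submodule.orthogonalProjection S w : HB)‖ ≤ ‖w‖ := by
    intro w S
    have h1 := (Submodule.orthogonalProjection S).le_opNorm w
    have h2 := Submodule.orthogonalProjectionOnto_norm_le S
    have h3 : ‖(Submodule.orthogonalProjection S w : HB)‖ = ‖Submodule.orthogonalProjection S w‖ := rfl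
    nlinarith [norm_nonneg w, norm_nonneg (Submodule.orthogonalProjection S w)]
  -- key: for x in R, γB x ∈ R
  have key : ∀ x ∈ R, γB x ∈ R := by
    rintro x ⟨ψ, rfl⟩
    set v := γB (φH ψ) with hv
    have h1 : φH (γA ψ) = (Submodule.orthogonalProjection R v : HB) := hcompat ψ
    have h2 : φH ψ = (Submodule.orthogonalProjection R (γB (φH (γA ψ))) : HB) := by
      have := hcompat (γA ψ)
      rwa [hγAsq] at this
    rw [h1] at h2
    have hPv_mem : (Submodule.orthogonalProjection R v : HB) ∈ R := (Submodule.orthogonalProjection R v).2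
    have hn1 : ‖φH ψ‖ ≤ ‖γB ((Submodule.orthogonalProjection R v : HB))‖ := by
      rw [h2]; exact hple _ _
    rw [hiso] at hn1
    have hn2 : ‖(Submodule.orthogonalProjection R v : HB)‖ ≤ ‖v‖ := hple _ _
    have hvn : ‖v‖ = ‖φH ψ‖ := hiso _
    have heq : ‖(Submodule.orthogonalProjection R v : HB)‖ = ‖v‖ := le_antisymm hn2 (hvn ▸ hn1)
    have hpy : ‖v‖ ^ 2 = ‖Submodule.orthogonalProjection R v‖ ^ 2 + ‖Submodule.orthogonalProjection Rᗮ v‖ ^ 2 :=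
      Submodule.norm_sq_eq_add_norm_sq_projection v R
    have e1 : ‖(Submodule.orthogonalProjection R v : HB)‖ = ‖Submodule.orthogonalProjection R v‖ := rfl
    have e2 : ‖(Submodule.orthogonalProjection Rᗮ v : HB)‖ = ‖Submodule.orthogonalProjection Rᗮ v‖ := rfl
    have hzero : ‖(Submodule.orthogonalProjection Rᗮ v : HB)‖ = 0 := by
      nlinarith [norm_nonneg ((Submodule.orthogonalProjection Rᗮ v : HB)), norm_nonneg v]
    have hvP : (Submodule.orthogonalProjection R v : HB) = v := by
      have hsum : (Submodule.orthogonalProjection R v : HB) + (Submodule.orthogonalProjection Rᗮ v : HB) = v :=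
          R.starProjection_add_starProjection_orthogonal v
      rw [norm_eq_zero] at hzero
      rw [hzero] at hsum
      simpa using hsum
    rw [← hvP]; exact hPv_mem
  have strong : ∀ ψ, φH (γA ψ) = γB (φH ψ) := by
    intro ψ
    rw [hcompat ψ]
    exact Submodule.starProjection_eq_self_iff.2 (key _ ⟨ψ, rfl⟩)
  refine ⟨key, ?_, strong, ?_, ?_⟩
  · intro x hx y hy
    obtain ⟨ψ, rfl⟩ := hy
    have h0 : (inner ℂ (γB (φH ψ)) x : ℂ) = 0 := hx _ (key _ ⟨ψ, rfl⟩)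
    rw [← hγB_sa, LinearMap.adjoint_inner_left] at h0
    exact h0
  · intro ψ h
    have := strong ψ
    rw [h] at this
    exact this.symm
  · intro ψ h
    have := strong ψ
    rw [h] at this
    simpa using this.symm
end

section
/- Let H_A and H_B be finite-dimensional complex Hilbert spaces and φ_H : H_A → H_B an injective linear map, with P the orthogonal projection of H_B onto Ran(φ_H). Let D_A, γ_A be operators on H_A and D_B, γ_B operators on H_B with D_A† = D_A, D_B† = D_B, D_A ≠ 0, γ_A† = γ_A, γ_A² = id, γ_B† = γ_B, γ_B² = id. Let J_A, J_B be antiunitary operators on H_A, H_B with J_A² = ε_A·id, J_B² = ε_B·id, and suppose that for signs ε'_A, ε'_B, ε''_A, ε''_B ∈ {+1,−1} one has J_A D_A = ε'_A D_A J_A, J_B D_B = ε'_B D_B J_B, J_A γ_A = ε''_A γ_A J_A, J_B γ_B = ε''_B γ_B J_B. Assume D_B is φ-compatible with D_A (φ_H ∘ D_A = P ∘ D_B ∘ φ_H), J_B is strongly φ-compatible with J_A (φ_H ∘ J_A = J_B ∘ φ_H), and γ_B is φ-compatible with γ_A (φ_H ∘ γ_A = P ∘ γ_B ∘ φ_H).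 Then ε_A = ε_B, ε'_A = ε'_B, and ε''_A = ε''_B; that is, the two (even) real spectral triples have the same KO-dimension mod 8. -/
/-- Two (even) real spectral triples related by an injective φ-compatible
map `φ_H` — with `D_B` φ-compatible with `D_A` (`D_A ≠ 0`), `J_B` strongly φ-compatible with
`J_A`, and `γ_B` φ-compatible with `γ_A` — have the same KO-dimension mod 8, i.e. the signs
`(ε, ε', ε'')` coincide. -/
theorem statement14 {HA HB : Type*}
    [NormedAddCommGroup HA] [InnerProductSpace ℂ HA] [FiniteDimensional ℂ HA]
    [NormedAddCommGroup HB] [InnerProductSpace ℂ HB] [FiniteDimensional ℂ HB]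
    (φH : HA →ₗ[ℂ] HB) (hφH_inj : Function.Injective φH)
    (DA : HA →ₗ[ℂ] HA) (DB : HB →ₗ[ℂ] HB)
    (hDA_sa : LinearMap.adjoint DA = DA) (hDB_sa : LinearMap.adjoint DB = DB)
    (hDA_ne : DA ≠ 0)
    (γA : HA →ₗ[ℂ] HA) (γB : HB →ₗ[ℂ] HB)
    (hγA_sa : LinearMap.adjoint γA = γA) (hγA_sq : γA ∘ₗ γA = LinearMap.id)
    (hγB_sa : LinearMap.adjoint γB = γB) (hγB_sq : γB ∘ₗ γB = LinearMap.id)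
    (JA : HA →ₗ⋆[ℂ] HA) (JB : HB →ₗ⋆[ℂ] HB)
    (hJA_bij : Function.Bijective JA) (hJB_bij : Function.Bijective JB)
    (hJA_anti : ∀ ψ₁ ψ₂ : HA, (inner ℂ (JA ψ₁) (JA ψ₂) : ℂ) = inner ℂ ψ₂ ψ₁)
    (hJB_anti : ∀ ψ₁ ψ₂ : HB, (inner ℂ (JB ψ₁) (JB ψ₂) : ℂ) = inner ℂ ψ₂ ψ₁)
    (εA εB ε'A ε'B ε''A ε''B : ℝ)
    (hεA : εA = 1 ∨ εA = -1) (hεB : εB = 1 ∨ εB = -1)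
    (hε'A : ε'A = 1 ∨ ε'A = -1) (hε'B : ε'B = 1 ∨ ε'B = -1)
    (hε''A : ε''A = 1 ∨ ε''A = -1) (hε''B : ε''B = 1 ∨ ε''B = -1)
    (hJA2 : ∀ ψ, JA (JA ψ) = (εA : ℂ) • ψ)
    (hJB2 : ∀ ψ, JB (JB ψ) = (εB : ℂ) • ψ)
    (hJADA : ∀ ψ, JA (DA ψ) = (ε'A : ℂ) • DA (JA ψ))
    (hJBDB : ∀ ψ, JB (DB ψ) = (ε'B : ℂ) • DB (JB ψ))
    (hJAγA : ∀ ψ, JA (γA ψ) = (ε''A : ℂ) • γA (JA ψ))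
    (hJBγB : ∀ ψ, JB (γB ψ) = (ε''B : ℂ) • γB (JB ψ))
    (hD_compat : ∀ ψ, φH (DA ψ)
      = (Submodule.orthogonalProjection (LinearMap.range φH) (DB (φH ψ)) : HB))
    (hJ_strong : ∀ ψ, φH (JA ψ) = JB (φH ψ))
    (hγ_compat : ∀ ψ, φH (γA ψ)
      = (Submodule.orthogonalProjection (LinearMap.range φH) (γB (φH ψ)) : HB)) :
    εA = εB ∧ ε'A = ε'B ∧ ε''A = ε''B := by

  classical
  set R := LinearMap.range φH with hR
  -- a nonzero vector moved by DA
  have hχ : ∃ χ : HA, DA χ ≠ 0 := by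
    by_contra h
    push_neg at h
    exact hDA_ne (LinearMap.ext fun x => by simp [h x])
  obtain ⟨χ, hχ⟩ := hχ
  have hχ0 : χ ≠ 0 := fun h => hχ (by simp [h])
  -- cancellation lemma
  have hcancel : ∀ (a b : ℝ) (v : HB), v ≠ 0 → (a : ℂ) • v = (b : ℂ) • v → a = b := by
    intro a b v hv h
    have h0 : ((a : ℂ) - (b : ℂ)) • v = 0 := by rw [sub_smul, h, sub_self]
    rcases smul_eq_zero.mp h0 with h' | h'
    · have : (a : ℂ) = (b : ℂ) := sub_eq_zero.mp h'
      exact_mod_cast this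
    · exact absurd h' hv
  -- JB maps R into R
  have hJB_R : ∀ x ∈ R, JB x ∈ R := by
    rintro x ⟨ψ, rfl⟩
    exact ⟨JA ψ, hJ_strong ψ⟩
  have hJB_Rsurj : ∀ x ∈ R, ∃ y ∈ R, JB y = x := by
    rintro x ⟨ψ, rfl⟩
    obtain ⟨χ', hχ'⟩ := hJA_bij.2 ψ
    exact ⟨φH χ', ⟨χ', rfl⟩, by rw [← hJ_strong, hχ']⟩
  have hJB_Rperp : ∀ x ∈ Rᗮ, JB x ∈ Rᗮ := by
    intro x hx
    rw [Submodule.mem_orthogonal]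
    intro u hu
    obtain ⟨s, hs, rfl⟩ := hJB_Rsurj u hu
    rw [hJB_anti]
    exact (Submodule.mem_orthogonal' R x).mp hx s hs
  -- JB commutes with the orthogonal projection onto R
  have hcomm : ∀ z : HB,
      JB ((Submodule.orthogonalProjection R z : HB)) = (Submodule.orthogonalProjection R (JB z) : HB) := by
    intro z
    have h1 : JB z = JB ((Submodule.orthogonalProjection R z : HB))
        + JB (z - (Submodule.orthogonalProjection R z : HB)) := by
      rw [← map_add]; congr 1; abel
    have h2 : (Submodule.orthogonalProjection R (JB ((Submodule.orthogonalProjection R z : HB))) : HB)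
        = JB ((Submodule.orthogonalProjection R z : HB)) :=
      Submodule.starProjection_eq_self_iff.mpr (hJB_R _ (SetLike.coe_mem _))
    have h3 : Submodule.orthogonalProjection R (JB (z - (Submodule.orthogonalProjection R z : HB))) = 0 :=
      Submodule.orthogonalProjectionOnto_apply_of_mem_orthogonal
        (hJB_Rperp _ (Submodule.sub_starProjection_mem_orthogonal z))
    calc JB ((Submodule.orthogonalProjection R z : HB))
        = (Submodule.orthogonalProjection R (JB ((Submodule.orthogonalProjection R z : HB))) : HB)
          + (Submodule.orthogonalProjection R (JB (z - (Submodule.orthogonalProjection R z : HB))) : HB) := by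
          rw [h2, h3]; simp
      _ = (Submodule.orthogonalProjection R (JB z) : HB) := by
          rw [← Submodule.coe_add, ← map_add, ← h1]
  constructor
  · -- εA = εB
    have hv : φH χ ≠ 0 := fun h => hχ0 (hφH_inj (by simpa using h))
    apply hcancel _ _ _ hv
    calc (εA : ℂ) • φH χ = φH ((εA : ℂ) • χ) := (map_smul φH _ _).symm
      _ = φH (JA (JA χ)) := by rw [hJA2]
      _ = JB (JB (φH χ)) := by rw [hJ_strong, hJ_strong]
      _ = (εB : ℂ) • φH χ := hJB2 _
  constructor
  · -- ε'A = ε'B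
    obtain ⟨ψ, hψ⟩ := hJA_bij.2 χ
    have hv : φH (DA (JA ψ)) ≠ 0 := by
      rw [hψ]
      exact fun h => hχ (hφH_inj (by simpa using h))
    have key : (ε'A : ℂ) • φH (DA (JA ψ)) = (ε'B : ℂ) • φH (DA (JA ψ)) := by
      have e1 : φH (JA (DA ψ)) = (ε'A : ℂ) • φH (DA (JA ψ)) := by
        rw [hJADA, map_smul]
      have e2 : φH (JA (DA ψ)) = (ε'B : ℂ) • φH (DA (JA ψ)) := by
        rw [hJ_strong, hD_compat, hcomm, hJBDB, map_smul, hD_compat,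
          ← hJ_strong, Submodule.coe_smul]
      rw [← e1, e2]
    exact hcancel _ _ _ hv key
  · -- ε''A = ε''B
    have hγA_inj : Function.Injective γA := by
      intro x y h
      have := LinearMap.ext_iff.mp hγA_sq
      simpa using (this x).symm.trans ((congrArg γA h).trans (this y))
    have hJAχ : JA χ ≠ 0 := fun h => hχ0 (hJA_bij.1 (by simpa using h))
    have hv : φH (γA (JA χ)) ≠ 0 := by
      intro h
      exact hJAχ (hγA_inj (by simpa using hφH_inj (by simpa using h)))
    have key : (ε''A : ℂ) • φH (γA (JA χ)) = (ε''B : ℂ) • φH (γA (JA χ)) := by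
      have e1 : φH (JA (γA χ)) = (ε''A : ℂ) • φH (γA (JA χ)) := by
        rw [hJAγA, map_smul]
      have e2 : φH (JA (γA χ)) = (ε''B : ℂ) • φH (γA (JA χ)) := by
        rw [hJ_strong, hγ_compat, hcomm, hJBγB, map_smul, hγ_compat,
          ← hJ_strong, Submodule.coe_smul]
      rw [← e1, e2]
    exact hcancel _ _ _ hv key
end

section
/- Let A be a unital complex *-algebra and B a unital complex *-algebra, let π_A : A → End(H_A) and π_B : B → End(H_B) be *-representations on finite-dimensional complex Hilbert spaces with π_A(1_A) = id, let φ : A → B be a *-homomorphism (linear, multiplicative, star-preserving, not necessarily unital), and let φ_H : H_A → H_B be a linear map that is φ-compatible: φ_H(π_A(a)ψ) = π_B(φ(a)) φ_H(ψ) for all a ∈ A, ψ ∈ H_A. Let P be the orthogonal projection of H_B onto Ran(φ_H), and let D_A, D_B be operators on H_A, H_B such that D_B is φ-compatible with D_A, i.e. φ_H ∘ D_A = P ∘ D_B ∘ φ_H. Then for all a⁰, a¹ ∈ A, the operator π_B(φ(a⁰))·[D_B, π_B(φ(a¹))] − π_B(φ(a⁰a¹))·[D_B, π_B(φ(1_A))]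 on H_B is φ-compatible with the operator π_A(a⁰)·[D_A, π_A(a¹)] on H_A. -/
/-- If `φ_H` is φ-compatible for a *-homomorphism `φ : A → B` between
unital complex *-algebras (with `π_A` unital), and `D_B` is φ-compatible with `D_A`, then
the represented image of the universal one-form `a⁰ d_U a¹`, namely
`π_B(φ(a⁰)) [D_B, π_B(φ(a¹))] − π_B(φ(a⁰a¹)) [D_B, π_B(φ(1))]`, is φ-compatible with
`π_A(a⁰) [D_A, π_A(a¹)]`. -/
theorem statement16 {A B : Type*}
    [Ring A] [Algebra ℂ A] [StarRing A]
    [Ring B] [Algebra ℂ B] [StarRing B]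
    {HA HB : Type*}
    [NormedAddCommGroup HA] [InnerProductSpace ℂ HA] [FiniteDimensional ℂ HA]
    [NormedAddCommGroup HB] [InnerProductSpace ℂ HB] [FiniteDimensional ℂ HB]
    (πA : A →ₗ[ℂ] (HA →ₗ[ℂ] HA)) (πB : B →ₗ[ℂ] (HB →ₗ[ℂ] HB))
    (hπA_mul : ∀ x y, πA (x * y) = πA x ∘ₗ πA y)
    (hπA_star : ∀ x, πA (star x) = LinearMap.adjoint (πA x))
    (hπA_one : πA 1 = LinearMap.id)
    (hπB_mul : ∀ x y, πB (x * y) = πB x ∘ₗ πB y)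
    (hπB_star : ∀ x, πB (star x) = LinearMap.adjoint (πB x))
    (φ : A →ₗ[ℂ] B)
    (hφ_mul : ∀ x y, φ (x * y) = φ x * φ y)
    (hφ_star : ∀ x, φ (star x) = star (φ x))
    (φH : HA →ₗ[ℂ] HB)
    (hφH : ∀ a ψ, φH (πA a ψ) = πB (φ a) (φH ψ))
    (DA : HA →ₗ[ℂ] HA) (DB : HB →ₗ[ℂ] HB)
    (hD : ∀ ψ, φH (DA ψ)
      = (Submodule.orthogonalProjection (LinearMap.range φH) (DB (φH ψ)) : HB)) :
    ∀ (a₀ a₁ : A) (ψ : HA),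
      φH ((πA a₀ ∘ₗ (DA ∘ₗ πA a₁ - πA a₁ ∘ₗ DA)) ψ)
        = (Submodule.orthogonalProjection (LinearMap.range φH)
            (((πB (φ a₀) ∘ₗ (DB ∘ₗ πB (φ a₁) - πB (φ a₁) ∘ₗ DB))
              - (πB (φ (a₀ * a₁)) ∘ₗ (DB ∘ₗ πB (φ 1) - πB (φ 1) ∘ₗ DB))) (φH ψ)) : HB) := by
  intro a₀ a₁ ψ
  set K := LinearMap.range φH with hK
  -- π_B(φ(1)) acts as the identity on the range of φ_H
  have hQ : ∀ χ : HA, πB (φ 1) (φH χ) = φH χ := by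
    intro χ
    rw [← hφH, hπA_one]
    rfl
  -- the range of φ_H is invariant under π_B(φ(a))
  have hmem : ∀ (a : A) (x : HB), x ∈ K → πB (φ a) x ∈ K := by
    rintro a x ⟨χ, rfl⟩
    exact ⟨πA a χ, hφH a χ⟩
  -- the projection commutes with π_B(φ(a))
  have hcomm : ∀ (a : A) (x : HB),
      (Submodule.orthogonalProjection K (πB (φ a) x) : HB)
        = πB (φ a) (Submodule.orthogonalProjection K x : HB) := by
    intro a x
    have hdecomp : x = (Submodule.orthogonalProjection K x : HB)
        + (x - (Submodule.orthogonalProjection K x : HB)) := by abel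
    have h1 : (Submodule.orthogonalProjection K (πB (φ a) (Submodule.orthogonalProjection K x : HB)) : HB)
        = πB (φ a) (Submodule.orthogonalProjection K x : HB) := by
      show K.starProjection _ = _
      rw [Submodule.starProjection_eq_self_iff]
      exact hmem a _ (Submodule.orthogonalProjection K x).2
    have h2mem : πB (φ a) (x - (Submodule.orthogonalProjection K x : HB)) ∈ Kᗮ := by
      rw [Submodule.mem_orthogonal]
      intro u hu
      have hadj : inner ℂ u (πB (φ a) (x - (Submodule.orthogonalProjection K x : HB)))
          = (inner ℂ ((LinearMap.adjoint (πB (φ a))) u)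
              (x - (Submodule.orthogonalProjection K x : HB)) : ℂ) :=
        (LinearMap.adjoint_inner_left _ _ _).symm
      rw [hadj, ← hπB_star, ← hφ_star]
      have horth : x - (Submodule.orthogonalProjection K x : HB) ∈ Kᗮ :=
        K.sub_starProjection_mem_orthogonal x
      exact horth _ (hmem _ _ hu)
    have h2 : Submodule.orthogonalProjection K (πB (φ a) (x - (Submodule.orthogonalProjection K x : HB))) = 0 :=
      Submodule.orthogonalProjectionOnto_apply_of_mem_orthogonal h2mem
    calc (Submodule.orthogonalProjection K (πB (φ a) x) : HB)
        = (Submodule.orthogonalProjection K (πB (φ a) ((Submodule.orthogonalProjection K x : HB)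
            + (x - (Submodule.orthogonalProjection K x : HB)))) : HB) := by rw [← hdecomp]
      _ = (Submodule.orthogonalProjection K (πB (φ a) (Submodule.orthogonalProjection K x : HB)) : HB)
            + (Submodule.orthogonalProjection K (πB (φ a) (x - (Submodule.orthogonalProjection K x : HB))) : HB) := by
          rw [map_add, map_add, Submodule.coe_add]
      _ = πB (φ a) (Submodule.orthogonalProjection K x : HB) := by
          rw [h1, h2, Submodule.coe_zero, add_zero]
  -- now compute both sides
  simp only [LinearMap.sub_apply, LinearMap.comp_apply, map_sub, map_add]
  have hc : πB (φ (a₀ * a₁)) = πB (φ a₀) ∘ₗ πB (φ a₁) := by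
    rw [hφ_mul, hπB_mul]
  -- term 1
  have hT1 : (Submodule.orthogonalProjection K (πB (φ a₀) (DB (πB (φ a₁) (φH ψ)))) : HB)
      = φH (πA a₀ (DA (πA a₁ ψ))) := by
    rw [hcomm, ← hφH a₁ ψ, ← hD, ← hφH]
  -- term 2
  have hT2 : (Submodule.orthogonalProjection K (πB (φ a₀) (πB (φ a₁) (DB (φH ψ)))) : HB)
      = φH (πA a₀ (πA a₁ (DA ψ))) := by
    have : πB (φ a₀) (πB (φ a₁) (DB (φH ψ))) = πB (φ (a₀ * a₁)) (DB (φH ψ)) := by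
      rw [hc]; rfl
    rw [this, hcomm, ← hD, ← hφH]
    rw [hπA_mul]; rfl
  -- term 3
  have hT3 : (Submodule.orthogonalProjection K (πB (φ (a₀ * a₁)) (DB (πB (φ 1) (φH ψ)))) : HB)
      = φH (πA a₀ (πA a₁ (DA ψ))) := by
    rw [hQ, hcomm, ← hD, ← hφH, hπA_mul]; rfl
  -- term 4
  have hT4 : (Submodule.orthogonalProjection K (πB (φ (a₀ * a₁)) (πB (φ 1) (DB (φH ψ)))) : HB)
      = φH (πA a₀ (πA a₁ (DA ψ))) := by
    have h1 : (Submodule.orthogonalProjection K (πB (φ 1) (DB (φH ψ))) : HB)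
        = φH (DA ψ) := by
      rw [hcomm, ← hD, hQ]
    rw [hcomm, h1, ← hφH, hπA_mul]; rfl
  push_cast [map_sub]
  rw [hT1, hT2, hT3, hT4]
  abel
end

section
/- Let H_A and H_B be finite-dimensional complex Hilbert spaces and let φ_H : H_A → H_B be an isometric linear map (⟨φ_H ψ, φ_H ψ'⟩ = ⟨ψ, ψ'⟩ for all ψ, ψ' ∈ H_A). Let P be the orthogonal projection of H_B onto Ran(φ_H). For i = 1, …, n, let Bᵢ be an operator on H_B that is φ-compatible with an operator Aᵢ on H_A, i.e. φ_H ∘ Aᵢ = P ∘ Bᵢ ∘ φ_H. Then for all ψ₁, ψ₂ ∈ H_A: ⟨φ_H ψ₁, B₁ P B₂ P ⋯ P Bₙ (φ_H ψ₂)⟩ = ⟨ψ₁, A₁ A₂ ⋯ Aₙ ψ₂⟩. -/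
/-- `interleaveP P [B₁, …, Bₙ] = B₁ ∘ P ∘ B₂ ∘ P ∘ ⋯ ∘ P ∘ Bₙ` (identity for the empty
list): the product of the `Bᵢ` with the projection `P` interleaved. -/
def interleaveP {E : Type*} [AddCommGroup E] [Module ℂ E]
    (P : E →ₗ[ℂ] E) : List (E →ₗ[ℂ] E) → (E →ₗ[ℂ] E)
  | [] => LinearMap.id
  | [B] => B
  | B :: C :: rest => B ∘ₗ P ∘ₗ interleaveP P (C :: rest)

/-- `composeAll [A₁, …, Aₙ] = A₁ ∘ A₂ ∘ ⋯ ∘ Aₙ`. -/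
def composeAll {E : Type*} [AddCommGroup E] [Module ℂ E] :
    List (E →ₗ[ℂ] E) → (E →ₗ[ℂ] E)
  | [] => LinearMap.id
  | A :: rest => A ∘ₗ composeAll rest

lemma interleaveP_cons {E : Type*} [AddCommGroup E] [Module ℂ E]
    (P : E →ₗ[ℂ] E) (B : E →ₗ[ℂ] E) (l : List (E →ₗ[ℂ] E)) (x : E) (hx : P x = x) :
    interleaveP P (B :: l) x = B (P (interleaveP P l x)) := by
  cases l with
  | nil => simp [interleaveP, hx]
  | cons c rest => simp [interleaveP]

lemma statement18_aux {HA HB : Type*}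
    [NormedAddCommGroup HA] [InnerProductSpace ℂ HA] [FiniteDimensional ℂ HA]
    [NormedAddCommGroup HB] [InnerProductSpace ℂ HB] [FiniteDimensional ℂ HB]
    (φH : HA →ₗ[ℂ] HB)
    (As : List (HA →ₗ[ℂ] HA)) (Bs : List (HB →ₗ[ℂ] HB))
    (h : List.Forall₂ (fun A B => ∀ ψ, φH (A ψ)
      = ((LinearMap.range φH).orthogonalProjection (B (φH ψ)) : HB)) As Bs)
    (ψ : HA) :
    ((LinearMap.range φH).orthogonalProjection
      (interleaveP
        ((LinearMap.range φH).subtype ∘ₗ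
          ((LinearMap.range φH).orthogonalProjection).toLinearMap)
        Bs (φH ψ)) : HB) = φH (composeAll As ψ) := by
  have hPfix : ∀ x ∈ LinearMap.range φH,
      (((LinearMap.range φH).subtype ∘ₗ
        ((LinearMap.range φH).orthogonalProjection).toLinearMap) x) = x := by
    intro x hx
    simpa using (Submodule.starProjection_eq_self_iff.mpr hx)
  induction h generalizing ψ with
  | nil =>
    simp only [interleaveP, composeAll, LinearMap.id_apply]
    exact Submodule.starProjection_eq_self_iff.mpr (LinearMap.mem_range_self φH ψ)
  | @cons a b as bs hab htail ih =>
    rw [interleaveP_cons _ _ _ _ (hPfix _ (LinearMap.mem_range_self φH ψ))]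
    simp only [LinearMap.coe_comp, Function.comp_apply, Submodule.coe_subtype,
      ContinuousLinearMap.coe_coe]
    rw [ih ψ]
    simp only [composeAll, LinearMap.coe_comp, Function.comp_apply]
    exact (hab (composeAll as ψ)).symm

/-- For an isometric `φ_H` and operators `Bᵢ` φ-compatible with `Aᵢ`,
the matrix elements between inherited vectors of `B₁ P B₂ P ⋯ P Bₙ` coincide with those
of `A₁ A₂ ⋯ Aₙ`, where `P` is the orthogonal projection onto `Ran φ_H`. -/
theorem statement18 {HA HB : Type*}
    [NormedAddCommGroup HA] [InnerProductSpace ℂ HA] [FiniteDimensional ℂ HA]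
    [NormedAddCommGroup HB] [InnerProductSpace ℂ HB] [FiniteDimensional ℂ HB]
    (φH : HA →ₗ[ℂ] HB)
    (hiso : ∀ ψ ψ' : HA, (inner ℂ (φH ψ) (φH ψ') : ℂ) = inner ℂ ψ ψ')
    (n : ℕ) (A : Fin n → (HA →ₗ[ℂ] HA)) (B : Fin n → (HB →ₗ[ℂ] HB))
    (hcompat : ∀ i ψ, φH (A i ψ)
      = ((LinearMap.range φH).orthogonalProjection (B i (φH ψ)) : HB))
    (ψ₁ ψ₂ : HA) :
    (inner ℂ (φH ψ₁)
      (interleaveP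
        ((LinearMap.range φH).subtype ∘ₗ
          ((LinearMap.range φH).orthogonalProjection).toLinearMap)
        (List.ofFn B) (φH ψ₂)) : ℂ)
      = inner ℂ ψ₁ (composeAll (List.ofFn A) ψ₂) := by
  set R := LinearMap.range φH with hR
  have hfa : List.Forall₂ (fun A' B' => ∀ ψ, φH (A' ψ)
      = (R.orthogonalProjection (B' (φH ψ)) : HB)) (List.ofFn A) (List.ofFn B) := by
    rw [List.forall₂_iff_get]
    refine ⟨by simp, ?_⟩
    intro i h1 h2
    simp only [List.get_eq_getElem, List.getElem_ofFn]
    exact hcompat _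
  set X := interleaveP (R.subtype ∘ₗ (R.orthogonalProjection).toLinearMap)
    (List.ofFn B) (φH ψ₂) with hX
  have key : (R.orthogonalProjection X : HB) = φH (composeAll (List.ofFn A) ψ₂) :=
    statement18_aux φH _ _ hfa ψ₂
  have horth : (inner ℂ (φH ψ₁) (X - (R.orthogonalProjection X : HB)) : ℂ) = 0 :=
    (Submodule.mem_orthogonal R _).mp (Submodule.sub_starProjection_mem_orthogonal X)
      (φH ψ₁) (LinearMap.mem_range_self φH ψ₁)
  have : (inner ℂ (φH ψ₁) X : ℂ) = inner ℂ (φH ψ₁) ((R.orthogonalProjection X : HB)) := by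
    have := horth
    rw [inner_sub_right, sub_eq_zero] at this
    exact this
  rw [this, key, hiso]
end

section
/- Let H_A and H_B be finite-dimensional complex Hilbert spaces and let φ_H : H_A → H_B be an isometric linear map (⟨φ_H ψ, φ_H ψ'⟩ = ⟨ψ, ψ'⟩ for all ψ, ψ' ∈ H_A). Let P be the orthogonal projection of H_B onto Ran(φ_H). For i = 1, …, n, let Bᵢ be an operator on H_B that is φ-compatible with an operator Aᵢ on H_A, i.e. φ_H ∘ Aᵢ = P ∘ Bᵢ ∘ φ_H. Then Tr_{H_B}(P B₁ P B₂ P ⋯ P Bₙ P) = Tr_{H_A}(A₁ A₂ ⋯ Aₙ). -/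
lemma aux_interleave {HA HB : Type*}
    [NormedAddCommGroup HA] [InnerProductSpace ℂ HA]
    [NormedAddCommGroup HB] [InnerProductSpace ℂ HB] [FiniteDimensional ℂ HB]
    (φH : HA →ₗ[ℂ] HB) (lA : List (HA →ₗ[ℂ] HA)) (lB : List (HB →ₗ[ℂ] HB))
    (h : List.Forall₂ (fun a b => ∀ ψ, φH (a ψ)
        = ((Submodule.orthogonalProjection (LinearMap.range φH)) (b (φH ψ)) : HB)) lA lB)
    (ψ : HA) :
    ((LinearMap.range φH).subtype ∘ₗ
        (Submodule.orthogonalProjection (LinearMap.range φH)).toLinearMap)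
      (interleaveP
        ((LinearMap.range φH).subtype ∘ₗ
          (Submodule.orthogonalProjection (LinearMap.range φH)).toLinearMap) lB (φH ψ))
    = φH (composeAll lA ψ) := by
  induction h generalizing ψ with
  | nil =>
      simp only [interleaveP, composeAll, LinearMap.id_apply, LinearMap.comp_apply,
        Submodule.coe_subtype, ContinuousLinearMap.coe_coe]
      exact Submodule.starProjection_eq_self_iff.mpr (LinearMap.mem_range_self φH ψ)
  | @cons a b lA' lB' hab h' ih =>
      cases h' with
      | nil =>
          simp only [interleaveP, composeAll, LinearMap.comp_apply,
            Submodule.coe_subtype, ContinuousLinearMap.coe_coe, LinearMap.id_apply]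
          exact (hab ψ).symm
      | @cons a' b' lA'' lB'' hab' h'' =>
          have ihψ := ih ψ
          simp only [interleaveP, composeAll, LinearMap.comp_apply] at ihψ ⊢
          rw [ihψ]
          simp only [Submodule.coe_subtype, ContinuousLinearMap.coe_coe]
          exact (hab _).symm

/-- For an isometric `φ_H` and operators `Bᵢ` φ-compatible with `Aᵢ`,
`Tr_{H_B}(P B₁ P B₂ P ⋯ P Bₙ P) = Tr_{H_A}(A₁ A₂ ⋯ Aₙ)`, where `P` is the orthogonal
projection onto `Ran φ_H`. -/
theorem statement19 {HA HB : Type*}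
    [NormedAddCommGroup HA] [InnerProductSpace ℂ HA] [FiniteDimensional ℂ HA]
    [NormedAddCommGroup HB] [InnerProductSpace ℂ HB] [FiniteDimensional ℂ HB]
    (φH : HA →ₗ[ℂ] HB)
    (hiso : ∀ ψ ψ' : HA, (inner ℂ (φH ψ) (φH ψ') : ℂ) = inner ℂ ψ ψ')
    (n : ℕ) (A : Fin n → (HA →ₗ[ℂ] HA)) (B : Fin n → (HB →ₗ[ℂ] HB))
    (hcompat : ∀ i ψ, φH (A i ψ)
      = (Submodule.orthogonalProjection (LinearMap.range φH) (B i (φH ψ)) : HB)) :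
    LinearMap.trace ℂ HB
        (((LinearMap.range φH).subtype ∘ₗ
            (Submodule.orthogonalProjection (LinearMap.range φH)).toLinearMap) ∘ₗ
          interleaveP
            ((LinearMap.range φH).subtype ∘ₗ
              (Submodule.orthogonalProjection (LinearMap.range φH)).toLinearMap)
            (List.ofFn B) ∘ₗ
          ((LinearMap.range φH).subtype ∘ₗ
            (Submodule.orthogonalProjection (LinearMap.range φH)).toLinearMap))
      = LinearMap.trace ℂ HA (composeAll (List.ofFn A)) := by
  classical
  set R := LinearMap.range φH with hR
  set Q : HB →ₗ[ℂ] R := (Submodule.orthogonalProjection R).toLinearMap with hQ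
  set S : R →ₗ[ℂ] HB := R.subtype with hSdef
  set X : HB →ₗ[ℂ] HB := interleaveP (S ∘ₗ Q) (List.ofFn B) with hX
  have hinj : Function.Injective φH := by
    rw [← LinearMap.ker_eq_bot, LinearMap.ker_eq_bot']
    intro ψ hψ
    have h0 := hiso ψ ψ
    rw [hψ, inner_zero_right] at h0
    exact inner_self_eq_zero.mp h0.symm
  set e : HA ≃ₗ[ℂ] R := LinearEquiv.ofInjective φH hinj with he
  have hSe : ∀ ψ, S (e ψ) = φH ψ := fun ψ => rfl
  have hQS : Q ∘ₗ S = LinearMap.id := by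
    apply LinearMap.ext
    intro x
    simp [hQ, hSdef, Submodule.orthogonalProjectionOnto_mem_subspace_eq_self]
  have hF : List.Forall₂ (fun a b => ∀ ψ, φH (a ψ)
      = ((Submodule.orthogonalProjection R) (b (φH ψ)) : HB)) (List.ofFn A) (List.ofFn B) := by
    rw [List.forall₂_iff_get]
    refine ⟨by simp, ?_⟩
    intro i h1 h2
    simp only [List.get_ofFn]
    intro ψ
    exact hcompat _ ψ
  have key : ∀ ψ, (S ∘ₗ Q) (X (φH ψ)) = φH (composeAll (List.ofFn A) ψ) :=
    fun ψ => aux_interleave φH (List.ofFn A) (List.ofFn B) hF ψ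
  have hN : Q ∘ₗ X ∘ₗ S = e.conj (composeAll (List.ofFn A)) := by
    apply LinearMap.ext
    intro x
    apply Subtype.coe_injective
    have hx : S x = φH (e.symm x) := by
      conv_lhs => rw [← LinearEquiv.apply_symm_apply e x]
      exact hSe _
    have := key (e.symm x)
    simp only [LinearMap.comp_apply] at this ⊢
    calc (↑(Q (X (S x))) : HB) = (S ∘ₗ Q) (X (φH (e.symm x))) := by
            rw [← hx]; rfl
      _ = φH (composeAll (List.ofFn A) (e.symm x)) := this
      _ = ↑(e.conj (composeAll (List.ofFn A)) x) := by
            rw [LinearEquiv.conj_apply]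
            simp only [LinearMap.comp_apply, LinearEquiv.coe_coe]
            exact (hSe _).symm
  calc LinearMap.trace ℂ HB ((S ∘ₗ Q) ∘ₗ X ∘ₗ (S ∘ₗ Q))
      = LinearMap.trace ℂ HB (S ∘ₗ (Q ∘ₗ X ∘ₗ S ∘ₗ Q)) := by
        congr 1
    _ = LinearMap.trace ℂ R ((Q ∘ₗ X ∘ₗ S ∘ₗ Q) ∘ₗ S) := by
        rw [LinearMap.trace_comp_comm']
    _ = LinearMap.trace ℂ R (Q ∘ₗ X ∘ₗ S) := by
        congr 1
        simp only [LinearMap.comp_assoc, hQS, LinearMap.comp_id]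
    _ = LinearMap.trace ℂ R (e.conj (composeAll (List.ofFn A))) := by rw [hN]
    _ = LinearMap.trace ℂ HA (composeAll (List.ofFn A)) := LinearMap.trace_conj' _ _
end
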